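/- Let X and Y be Banach spaces, let F : X ⇒ Y be a set-valued mapping with (x̄, ȳ) ∈ gph F, and suppose F is metrically regular at x̄ for ȳ, i.e. reg F(x̄|ȳ) < ∞. Suppose for some c > 0 the sets F⁻¹(y) ∩ B_c(x̄) are convex and closed for all y ∈ B_c(ȳ). Then F⁻¹ has a continuous local selection x(·) around (ȳ, x̄): there exist neighborhoods V of ȳ and U of x̄ and a continuous function x : V → U with x(ȳ) = x̄ and x(y) ∈ F⁻¹(y) for all y ∈ V, which moreover is calm at ȳ with clm x(ȳ) ≤ reg F(x̄|ȳ). -/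

import Mathlib

open Metric Filter

/-- The modulus of metric regularity `reg F(xbar|ybar)` of a set-valued mapping
`F : X ⇒ Y` at `xbar` for `ybar`: the infimum of constants `κ` such that
`d(x, F⁻¹(y)) ≤ κ d(y, F(x))` for all `(x, y)` near `(xbar, ybar)` (value `⊤` if no
such constant exists, so metric regularity means `regModulus F xbar ybar < ⊤`). -/
noncomputable def regModulus {X Y : Type*} [NormedAddCommGroup X] [NormedAddCommGroup Y]
    (F : X → Set Y) (xbar : X) (ybar : Y) : ENNReal :=
  ⨅ (κ : NNReal) (_ : ∃ ε > (0 : ℝ), ∀ x ∈ ball xbar ε, ∀ y ∈ ball ybar ε,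
      EMetric.infEdist x {x' | y ∈ F x'} ≤ (κ : ENNReal) * EMetric.infEdist y (F x)),
    (κ : ENNReal)

/-- The modulus of calmness `clm s(ybar)` of a function `s : Y → X` at `ybar`: the infimum
of constants `γ` such that `‖s y - s ybar‖ ≤ γ‖y - ybar‖` for all `y` near `ybar`. -/
noncomputable def clmModulus {X Y : Type*} [NormedAddCommGroup X] [NormedAddCommGroup Y]
    (s : Y → X) (ybar : Y) : ENNReal :=
  ⨅ (γ : NNReal) (_ : ∃ ε > (0 : ℝ), ∀ y ∈ ball ybar ε,
      ‖s y - s ybar‖ ≤ (γ : ℝ) * ‖y - ybar‖), (γ : ENNReal)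

open Set Topology
open scoped ENNReal NNReal

theorem michael_step {α : Type*} [MetricSpace α] {X : Type*}
    [NormedAddCommGroup X] [NormedSpace ℝ X]
    (Φ : α → Set X)
    (hconv : ∀ a, Convex ℝ (Φ a))
    (hlsc : ∀ a, ∀ z ∈ Φ a, ∀ δ > (0:ℝ), ∀ᶠ a' in nhds a, ∃ z' ∈ Φ a', dist z' z < δ)
    (f : α → X) (hf : Continuous f) {ε δ : ℝ} (hδ : 0 < δ)
    (hfε : ∀ a, ∃ z ∈ Φ a, dist (f a) z < ε) :
    ∃ f' : α → X, Continuous f' ∧ (∀ a, ∃ z ∈ Φ a, dist (f' a) z < δ) ∧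
      ∀ a, dist (f' a) (f a) < ε + δ := by
  set t : α → Set X := fun a => Metric.thickening δ (Φ a) ∩ ball (f a) (ε + δ) with ht
  have htconv : ∀ a, Convex ℝ (t a) := fun a =>
    ((hconv a).thickening δ).inter (convex_ball _ _)
  have hloc : ∀ a, ∃ c, ∀ᶠ a' in nhds a, c ∈ t a' := by
    intro a
    obtain ⟨z, hz, hdz⟩ := hfε a
    refine ⟨z, ?_⟩
    have h1 := hlsc a z hz δ hδ
    have h2 : ∀ᶠ a' in nhds a, dist (f a') (f a) < ε + δ - dist z (f a) := by
      have hpos : 0 < ε + δ - dist z (f a) := by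
        rw [dist_comm] at hdz; linarith
      exact (hf.continuousAt (x := a)) (Metric.ball_mem_nhds (f a) hpos)
    filter_upwards [h1, h2] with a' h1' h2'
    obtain ⟨z', hz', hzz'⟩ := h1'
    constructor
    · exact Metric.mem_thickening_iff.2 ⟨z', hz', by rw [dist_comm] at hzz'; exact hzz'⟩
    · have : dist z (f a') ≤ dist z (f a) + dist (f a') (f a) := by
        rw [dist_comm (f a') (f a)]; exact dist_triangle _ _ _
      simp only [mem_ball]
      linarith
  obtain ⟨g, hg⟩ := exists_continuous_forall_mem_convex_of_local_const htconv hloc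
  refine ⟨g, g.continuous, fun a => ?_, fun a => ?_⟩
  · obtain ⟨z, hz, hdz⟩ := Metric.mem_thickening_iff.1 (hg a).1
    exact ⟨z, hz, hdz⟩
  · exact mem_ball.1 (hg a).2

theorem michael_selection {α : Type*} [MetricSpace α] {X : Type*}
    [NormedAddCommGroup X] [NormedSpace ℝ X] [CompleteSpace X]
    (Φ : α → Set X)
    (hne : ∀ a, (Φ a).Nonempty)
    (hconv : ∀ a, Convex ℝ (Φ a))
    (hclosed : ∀ a, IsClosed (Φ a))
    (hlsc : ∀ a, ∀ z ∈ Φ a, ∀ δ > (0:ℝ), ∀ᶠ a' in nhds a, ∃ z' ∈ Φ a', dist z' z < δ)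
    (x₀ : X) (M : ℝ) (hM : 0 < M) (hbound : ∀ a, ∃ z ∈ Φ a, dist x₀ z < M) :
    ∃ s : α → X, Continuous s ∧ ∀ a, s a ∈ Φ a := by
  set eps : ℕ → ℝ := fun n => M * (1/2) ^ n with heps
  have heps_pos : ∀ n, 0 < eps n := fun n => by positivity
  set T : ℕ → Type _ := fun n =>
    {f : α → X // Continuous f ∧ ∀ a, ∃ z ∈ Φ a, dist (f a) z < eps n} with hT
  have hstep : ∀ n (f : T n), ∃ f' : T (n+1),
      ∀ a, dist (f'.1 a) (f.1 a) < eps n + eps (n+1) := by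
    intro n f
    obtain ⟨f', h1, h2, h3⟩ :=
      michael_step Φ hconv hlsc f.1 f.2.1 (heps_pos (n+1)) f.2.2
    exact ⟨⟨f', h1, h2⟩, h3⟩
  have h0 : Continuous (fun _ : α => x₀) ∧ ∀ a, ∃ z ∈ Φ a, dist ((fun _ => x₀) a) z < eps 0 := by
    refine ⟨continuous_const, fun a => ?_⟩
    obtain ⟨z, hz, hdz⟩ := hbound a
    exact ⟨z, hz, by simpa [heps] using hdz⟩
  set u : ∀ n, T n := fun n => Nat.rec ⟨fun _ => x₀, h0⟩ (fun n f => (hstep n f).choose) n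
    with hu
  have hud : ∀ n a, dist ((u (n+1)).1 a) ((u n).1 a) < eps n + eps (n+1) := by
    intro n a
    exact (hstep n (u n)).choose_spec a
  have hgeo : ∀ a n, dist ((u n).1 a) ((u (n+1)).1 a) ≤ (2 * M) * (1/2) ^ n := by
    intro a n
    rw [dist_comm]
    refine (hud n a).le.trans ?_
    have : eps (n+1) ≤ eps n := by
      simp only [heps]
      have : ((1:ℝ)/2) ^ (n+1) ≤ (1/2) ^ n :=
        pow_le_pow_of_le_one (by norm_num) (by norm_num) (Nat.le_succ n)
      nlinarith
    simp only [heps] at this ⊢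
    nlinarith [pow_pos (show (0:ℝ) < 1/2 by norm_num) n]
  have hcauchy : ∀ a, ∃ l, Tendsto (fun n => (u n).1 a) atTop (nhds l) := by
    intro a
    refine cauchySeq_tendsto_of_complete ?_
    exact cauchySeq_of_le_geometric (1/2) (2*M) (by norm_num) (hgeo a)
  choose s hs using hcauchy
  have hsdist : ∀ n a, dist ((u n).1 a) (s a) ≤ (2*M) * (1/2)^n / (1 - 1/2) := by
    intro n a
    exact dist_le_of_le_geometric_of_tendsto (1/2) (2*M) (by norm_num) (hgeo a) (hs a) n
  have hB : Tendsto (fun n : ℕ => (2*M) * (1/2)^n / (1 - 1/2)) atTop (nhds 0) := by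
    have h1 : Tendsto (fun n : ℕ => ((1:ℝ)/2)^n) atTop (nhds 0) :=
      tendsto_pow_atTop_nhds_zero_of_lt_one (by norm_num) (by norm_num)
    have := (h1.const_mul (2*M)).div_const (1 - 1/2)
    simpa using this
  have huc : TendstoUniformly (fun n a => (u n).1 a) s atTop := by
    rw [Metric.tendstoUniformly_iff]
    intro ε hε
    filter_upwards [hB.eventually (gt_mem_nhds hε)] with n hn a
    calc dist (s a) ((u n).1 a) = dist ((u n).1 a) (s a) := dist_comm _ _
      _ ≤ (2*M) * (1/2)^n / (1 - 1/2) := hsdist n a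
      _ < ε := hn
  have hscont : Continuous s :=
    huc.continuous (Frequently.of_forall fun n => (u n).2.1)
  refine ⟨s, hscont, fun a => ?_⟩
  rw [← (hclosed a).closure_eq]
  rw [Metric.mem_closure_iff]
  intro ε hε
  have h2 : Tendsto (fun n : ℕ => (2*M) * (1/2)^n / (1 - 1/2) + eps n) atTop (nhds 0) := by
    have h1 : Tendsto (fun n : ℕ => ((1:ℝ)/2)^n) atTop (nhds 0) :=
      tendsto_pow_atTop_nhds_zero_of_lt_one (by norm_num) (by norm_num)
    have := hB.add (h1.const_mul M)
    simp only [heps]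
    simpa [mul_comm] using this
  obtain ⟨n, hn⟩ := (h2.eventually (gt_mem_nhds hε)).exists
  obtain ⟨z, hz, hdz⟩ := (u n).2.2 a
  refine ⟨z, hz, ?_⟩
  calc dist (s a) z ≤ dist (s a) ((u n).1 a) + dist ((u n).1 a) z := dist_triangle _ _ _
    _ ≤ (2*M) * (1/2)^n / (1 - 1/2) + eps n := by
        rw [dist_comm (s a)]
        exact add_le_add (hsdist n a) hdz.le
    _ < ε := hn

theorem reg_key {X Y : Type*} [NormedAddCommGroup X] [NormedAddCommGroup Y]
    (F : X → Set Y) (xbar : X) (ybar : Y) (κ : NNReal) (ε : ℝ)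
    (hP : ∀ x ∈ ball xbar ε, ∀ y ∈ ball ybar ε,
      EMetric.infEdist x {x' | y ∈ F x'} ≤ (κ : ENNReal) * EMetric.infEdist y (F x))
    {x : X} (hx : x ∈ ball xbar ε) {y : Y} (hy : y ∈ ball ybar ε)
    {v : Y} (hv : v ∈ F x) {δ : ℝ} (hδ : 0 < δ) :
    ∃ x', y ∈ F x' ∧ dist x' x < (κ : ℝ) * dist y v + δ := by
  have h1 : EMetric.infEdist x {x' | y ∈ F x'} ≤ (κ : ENNReal) * edist y v :=
    (hP x hx y hy).trans (mul_le_mul_right (EMetric.infEdist_le_edist_of_mem hv) _)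
  have h2 : EMetric.infEdist x {x' | y ∈ F x'} <
      ENNReal.ofReal ((κ : ℝ) * dist y v + δ) := by
    refine h1.trans_lt ?_
    rw [ENNReal.ofReal_add (by positivity) hδ.le]
    have hmul : (κ : ENNReal) * edist y v = ENNReal.ofReal ((κ : ℝ) * dist y v) := by
      rw [edist_dist, ← ENNReal.ofReal_coe_nnreal, ← ENNReal.ofReal_mul κ.coe_nonneg]
    rw [hmul]
    exact ENNReal.lt_add_right ENNReal.ofReal_ne_top (ENNReal.ofReal_pos.2 hδ).ne'
  obtain ⟨x', hx', hd⟩ := EMetric.infEdist_lt_iff.1 h2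
  exact ⟨x', hx', by rw [dist_comm]; exact edist_lt_ofReal.1 hd⟩

set_option maxHeartbeats 1000000 in
/-- Theorem 2.2: if `F : X ⇒ Y` is metrically regular at `xbar` for `ybar` and the sets
`F⁻¹(y) ∩ B_c(xbar)` are convex and closed for `y ∈ B_c(ybar)`, then `F⁻¹` has a
continuous local selection around `(ybar, xbar)` which is calm at `ybar` with calmness
modulus at most `reg F(xbar|ybar)`. -/
theorem inverse_has_continuous_calm_local_selection
    {X Y : Type*} [NormedAddCommGroup X] [NormedSpace ℝ X] [CompleteSpace X]
    [NormedAddCommGroup Y] [NormedSpace ℝ Y] [CompleteSpace Y]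
    (F : X → Set Y) (xbar : X) (ybar : Y) (hmem : ybar ∈ F xbar)
    (hreg : regModulus F xbar ybar < ⊤)
    (c : ℝ) (hc : 0 < c)
    (hcc : ∀ y ∈ closedBall ybar c,
      Convex ℝ ({x | y ∈ F x} ∩ closedBall xbar c) ∧
      IsClosed ({x | y ∈ F x} ∩ closedBall xbar c)) :
    ∃ V ∈ nhds ybar, ∃ U ∈ nhds xbar, ∃ s : Y → X,
      ContinuousOn s V ∧ s ybar = xbar ∧
      (∀ y ∈ V, s y ∈ U ∧ y ∈ F (s y)) ∧
      clmModulus s ybar ≤ regModulus F xbar ybar := by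
  classical
  set Adm : NNReal → Prop := fun κ => ∃ ε > (0:ℝ), ∀ x ∈ ball xbar ε, ∀ y ∈ ball ybar ε,
      EMetric.infEdist x {x' | y ∈ F x'} ≤ (κ : ENNReal) * EMetric.infEdist y (F x) with hAdm
  have hregeq : regModulus F xbar ybar = ⨅ (κ : NNReal) (_ : Adm κ), (κ : ENNReal) := rfl
  have hlt : ∀ η : ENNReal, regModulus F xbar ybar < η →
      ∃ κ : NNReal, Adm κ ∧ (κ : ENNReal) < η := by
    intro η hη
    rw [hregeq, iInf_lt_iff] at hη
    obtain ⟨κ, hκ⟩ := hη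
    by_cases h : Adm κ
    · rw [iInf_pos h] at hκ; exact ⟨κ, h, hκ⟩
    · rw [iInf_neg h] at hκ; exact absurd hκ (not_lt.2 le_top)
  obtain ⟨κ₀, hκ₀, -⟩ := hlt ⊤ hreg
  obtain ⟨ε₀, hε₀, hP₀⟩ := hκ₀
  set a₀ : ℝ := (κ₀ : ℝ) with ha₀
  have ha₀0 : (0:ℝ) ≤ a₀ := κ₀.coe_nonneg
  set m : ℝ := min ε₀ (min c 1) with hm
  have hm0 : 0 < m := lt_min hε₀ (lt_min hc one_pos)
  have hmε₀ : m ≤ ε₀ := min_le_left _ _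
  have hmc : m ≤ c := (min_le_right _ _).trans (min_le_left _ _)
  have hm1 : m ≤ 1 := (min_le_right _ _).trans (min_le_right _ _)
  set r₀ : ℝ := m / (2 * (a₀ + 1)) with hr₀def
  have hr₀pos : 0 < r₀ := by positivity
  set R : ℝ := (a₀ + 1) * r₀ with hRdef
  have hRpos : 0 < R := by positivity
  have hRm : R = m / 2 := by rw [hRdef, hr₀def]; field_simp
  have hRε₀ : R < ε₀ := by rw [hRm]; linarith
  have hRc : R ≤ c := by rw [hRm]; linarith
  have hr₀R : r₀ ≤ R := by rw [hRdef]; nlinarith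
  have hr₀1 : r₀ ≤ 1 := by
    rw [hr₀def]
    calc m / (2 * (a₀ + 1)) ≤ m / 2 := by
          apply div_le_div_of_nonneg_left hm0.le two_pos; linarith
      _ ≤ 1 := by linarith
  have hr₀ε₀ : r₀ < ε₀ := lt_of_le_of_lt hr₀R hRε₀
  have hr₀c : r₀ ≤ c := hr₀R.trans hRc
  set D : Y → ℝ := fun y => infDist xbar {x | y ∈ F x} with hDdef
  set r : Y → ℝ := fun y => D y + (dist y ybar)^2 with hrdef
  have hsubε₀ : ball ybar r₀ ⊆ ball ybar ε₀ := ball_subset_ball hr₀ε₀.le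
  have hFne : ∀ y ∈ ball ybar ε₀, {x | y ∈ F x}.Nonempty := by
    intro y hy
    obtain ⟨x', hx', -⟩ :=
      reg_key F xbar ybar κ₀ ε₀ hP₀ (mem_ball_self hε₀) hy hmem one_pos
    exact ⟨x', hx'⟩
  have hD0 : ∀ y, 0 ≤ D y := fun y => infDist_nonneg
  have hDbar : D ybar = 0 := infDist_zero_of_mem hmem
  have hD : ∀ y ∈ ball ybar ε₀, D y ≤ a₀ * dist y ybar := by
    intro y hy
    refine le_of_forall_pos_le_add fun δ hδ => ?_
    obtain ⟨x', hx', hd⟩ :=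
      reg_key F xbar ybar κ₀ ε₀ hP₀ (mem_ball_self hε₀) hy hmem hδ
    calc D y ≤ dist xbar x' := infDist_le_dist_of_mem hx'
      _ = dist x' xbar := dist_comm _ _
      _ ≤ a₀ * dist y ybar + δ := hd.le
  have hrr : ∀ y ∈ ball ybar r₀, r y ≤ (a₀ + 1) * dist y ybar := by
    intro y hy
    have h1 := hD y (hsubε₀ hy)
    have h2 : dist y ybar < r₀ := mem_ball.1 hy
    have h3 : (0:ℝ) ≤ dist y ybar := dist_nonneg
    simp only [hrdef]
    nlinarith
  have hrR : ∀ y ∈ ball ybar r₀, r y ≤ R := by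
    intro y hy
    refine (hrr y hy).trans ?_
    rw [hRdef]
    have h2 : dist y ybar < r₀ := mem_ball.1 hy
    nlinarith
  have hr0 : ∀ y, 0 ≤ r y := by
    intro y; simp only [hrdef]; exact add_nonneg (hD0 y) (sq_nonneg _)
  have hrbar : r ybar = 0 := by simp [hrdef, hDbar]
  have hDlip : ∀ y ∈ ball ybar r₀, ∀ y' ∈ ball ybar r₀,
      D y' ≤ D y + a₀ * dist y' y := by
    intro y hy y' hy'
    refine le_of_forall_pos_le_add fun δ hδ => ?_
    have hyε : y ∈ ball ybar ε₀ := hsubε₀ hy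
    have hDyR : D y < R := by
      have h1 := hD y hyε
      have h2 : dist y ybar < r₀ := mem_ball.1 hy
      rw [hRdef]; nlinarith
    set δ₁ : ℝ := min (δ/2) (ε₀ - R) with hδ₁def
    have hδ₁pos : 0 < δ₁ := lt_min (half_pos hδ) (by linarith)
    obtain ⟨x, hxmem, hxd⟩ := (infDist_lt_iff (hFne y hyε)).1
      (show D y < D y + δ₁ by linarith)
    have hxball : x ∈ ball xbar ε₀ := by
      rw [mem_ball, dist_comm]
      have : δ₁ ≤ ε₀ - R := min_le_right _ _
      linarith
    obtain ⟨x'', hx'', hd''⟩ :=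
      reg_key F xbar ybar κ₀ ε₀ hP₀ hxball (hsubε₀ hy') hxmem (half_pos hδ)
    have hδ₁half : δ₁ ≤ δ/2 := min_le_left _ _
    calc D y' ≤ dist xbar x'' := infDist_le_dist_of_mem hx''
      _ ≤ dist xbar x + dist x x'' := dist_triangle _ _ _
      _ = dist xbar x + dist x'' x := by rw [dist_comm x x'']
      _ ≤ (D y + δ₁) + (a₀ * dist y' y + δ/2) := by
          exact add_le_add hxd.le hd''.le
      _ ≤ D y + a₀ * dist y' y + δ := by linarith
  set V : Set Y := ball ybar r₀ with hVdef
  set Φ : ↥V → Set X := fun a =>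
    if (a : Y) = ybar then {xbar}
    else closure ({x | (a : Y) ∈ F x} ∩ ball xbar (r (a : Y))) with hΦdef
  have hballc : ∀ y ∈ V, ball xbar (r y) ⊆ closedBall xbar c := by
    intro y hy
    exact ball_subset_closedBall.trans
      (closedBall_subset_closedBall ((hrR y hy).trans hRc))
  have hycball : ∀ y ∈ V, y ∈ closedBall ybar c := by
    intro y hy
    exact mem_closedBall.2 ((mem_ball.1 hy).le.trans hr₀c)
  have hΦsub : ∀ a : ↥V, Φ a ⊆ closedBall xbar (r (a : Y)) := by
    intro a
    simp only [hΦdef]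
    by_cases h : (a : Y) = ybar
    · rw [if_pos h]
      intro z hz
      rw [mem_singleton_iff] at hz
      subst hz
      exact mem_closedBall_self (hr0 _)
    · rw [if_neg h]
      exact closure_minimal (inter_subset_right.trans ball_subset_closedBall)
        Metric.isClosed_closedBall
  have hΦne : ∀ a : ↥V, (Φ a).Nonempty := by
    intro a
    simp only [hΦdef]
    by_cases h : (a : Y) = ybar
    · rw [if_pos h]; exact ⟨xbar, rfl⟩
    · rw [if_neg h]
      have ht : 0 < dist (a : Y) ybar := dist_pos.2 h
      have hne := hFne (a : Y) (hsubε₀ a.2)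
      have hlt : D (a : Y) < r (a : Y) := by
        simp only [hrdef]; nlinarith
      obtain ⟨x, hx, hdx⟩ := (infDist_lt_iff hne).1 hlt
      exact ⟨x, subset_closure ⟨hx, mem_ball.2 (by rw [dist_comm]; exact hdx)⟩⟩
  have hΦconv : ∀ a : ↥V, Convex ℝ (Φ a) := by
    intro a
    simp only [hΦdef]
    by_cases h : (a : Y) = ybar
    · rw [if_pos h]; exact convex_singleton _
    · rw [if_neg h]
      have hset : {x | (a : Y) ∈ F x} ∩ ball xbar (r (a : Y)) =
          ({x | (a : Y) ∈ F x} ∩ closedBall xbar c) ∩ ball xbar (r (a : Y)) := by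
        ext x
        constructor
        · rintro ⟨h1, h2⟩; exact ⟨⟨h1, hballc _ a.2 h2⟩, h2⟩
        · rintro ⟨⟨h1, -⟩, h2⟩; exact ⟨h1, h2⟩
      rw [hset]
      exact (((hcc _ (hycball _ a.2)).1).inter (convex_ball _ _)).closure
  have hΦclosed : ∀ a : ↥V, IsClosed (Φ a) := by
    intro a
    simp only [hΦdef]
    by_cases h : (a : Y) = ybar
    · rw [if_pos h]; exact isClosed_singleton
    · rw [if_neg h]; exact isClosed_closure
  have hΦF : ∀ a : ↥V, Φ a ⊆ {x | (a : Y) ∈ F x} := by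
    intro a
    simp only [hΦdef]
    by_cases h : (a : Y) = ybar
    · rw [if_pos h]
      intro z hz
      rw [mem_singleton_iff] at hz
      subst hz
      rw [mem_setOf_eq, h]
      exact hmem
    · rw [if_neg h]
      refine (closure_minimal ?_ (hcc _ (hycball _ a.2)).2).trans inter_subset_left
      rintro x ⟨h1, h2⟩
      exact ⟨h1, hballc _ a.2 h2⟩
  have hbound : ∀ a : ↥V, ∃ z ∈ Φ a, dist xbar z < R + 1 := by
    intro a
    obtain ⟨z, hz⟩ := hΦne a
    refine ⟨z, hz, ?_⟩
    have h1 : dist z xbar ≤ r (a : Y) := mem_closedBall.1 (hΦsub a hz)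
    have h2 : r (a : Y) ≤ R := hrR _ a.2
    rw [dist_comm]
    linarith
  have hsub : ∀ {p : Y → Prop}, (∀ᶠ y' in nhds ybar, True) → True := fun _ => trivial
  clear hsub
  have htrans : ∀ (a : ↥V) {p : Y → Prop}, (∀ᶠ y' in nhds (a : Y), p y') →
      ∀ᶠ a' : ↥V in nhds a, p (a' : Y) := by
    intro a p h
    exact (continuous_subtype_val.continuousAt (x := a)).eventually h
  have hΦlsc : ∀ a : ↥V, ∀ z ∈ Φ a, ∀ δ > (0:ℝ),
      ∀ᶠ a' : ↥V in nhds a, ∃ z' ∈ Φ a', dist z' z < δ := by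
    intro a z hz δ hδ
    by_cases h : (a : Y) = ybar
    · have hzx : z = xbar := by
        rw [hΦdef] at hz; simp only [if_pos h] at hz
        exact mem_singleton_iff.1 hz
      have hδ' : 0 < δ / (a₀ + 1) := by positivity
      have hev : ∀ᶠ y' in nhds (a : Y), dist y' ybar < δ / (a₀ + 1) := by
        rw [h]
        filter_upwards [Metric.ball_mem_nhds ybar hδ'] with y' hy'
        exact mem_ball.1 hy'
      filter_upwards [htrans a hev] with a' hd'
      obtain ⟨z', hz'⟩ := hΦne a'
      refine ⟨z', hz', ?_⟩
      have h1 : dist z' xbar ≤ r (a' : Y) := mem_closedBall.1 (hΦsub a' hz')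
      have h2 : r (a' : Y) ≤ (a₀ + 1) * dist (a' : Y) ybar := hrr _ a'.2
      have h3 : (a₀ + 1) * dist (a' : Y) ybar < (a₀ + 1) * (δ / (a₀ + 1)) :=
        mul_lt_mul_of_pos_left hd' (by linarith)
      have h4 : (a₀ + 1) * (δ / (a₀ + 1)) = δ := by field_simp
      rw [hzx]
      linarith
    · set y : Y := (a : Y) with hydef
      have ht : 0 < dist y ybar := dist_pos.2 h
      have hz' : z ∈ closure ({x | y ∈ F x} ∩ ball xbar (r y)) := by
        rw [hΦdef] at hz; simp only [if_neg (show ¬ (a : Y) = ybar from h)] at hz; exact hz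
      obtain ⟨w, hw, hwz⟩ := Metric.mem_closure_iff.1 hz' (δ/2) (half_pos hδ)
      obtain ⟨hwF, hwb⟩ := hw
      have hgap : 0 < r y - dist w xbar := by
        have := mem_ball.1 hwb; linarith
      set gap : ℝ := r y - dist w xbar with hgapdef
      set d₀ : ℝ := min (dist y ybar)
        (min (gap / (4*(a₀ + r₀ + 1))) (δ/(4*(a₀+1)))) with hd₀def
      have hd₀pos : 0 < d₀ := lt_min ht (lt_min (by positivity) (by positivity))
      have hev : ∀ᶠ y' in nhds y, dist y' y < d₀ := by
        filter_upwards [Metric.ball_mem_nhds y hd₀pos] with y' hy'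
        exact mem_ball.1 hy'
      filter_upwards [htrans a hev] with a' hd'
      set y' : Y := (a' : Y) with hy'def
      have hy'V : y' ∈ ball ybar r₀ := a'.2
      have hy'ne : y' ≠ ybar := by
        intro hcon
        have h1 : d₀ ≤ dist y ybar := min_le_left _ _
        have h2 : dist y' y = dist y ybar := by rw [hcon, dist_comm]
        rw [h2] at hd'
        linarith
      have hwball : w ∈ ball xbar ε₀ := by
        rw [mem_ball]
        have h1 := mem_ball.1 hwb
        have h2 := hrR y a.2
        linarith
      have hy'ε : y' ∈ ball ybar ε₀ := hsubε₀ hy'V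
      set δ₂ : ℝ := min (δ/4) (gap/4) with hδ₂def
      have hδ₂pos : 0 < δ₂ := lt_min (by positivity) (by positivity)
      obtain ⟨x', hx'F, hx'd⟩ :=
        reg_key F xbar ybar κ₀ ε₀ hP₀ hwball hy'ε hwF hδ₂pos
      have hd1 : dist y' y < gap / (4*(a₀ + r₀ + 1)) :=
        hd'.trans_le ((min_le_right _ _).trans (min_le_left _ _))
      have hd2 : dist y' y < δ/(4*(a₀+1)) :=
        hd'.trans_le ((min_le_right _ _).trans (min_le_right _ _))
      have hDlb : D y ≤ D y' + a₀ * dist y y' := hDlip y' hy'V y a.2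
      have hsq : (dist y ybar)^2 ≤ (dist y' ybar)^2 + 2*r₀ * dist y' y := by
        have h1 : dist y ybar ≤ dist y y' + dist y' ybar := dist_triangle _ _ _
        have h2 : dist y ybar < r₀ := mem_ball.1 a.2
        have h3 : dist y' ybar < r₀ := mem_ball.1 hy'V
        have h4 : (0:ℝ) ≤ dist y' ybar := dist_nonneg
        have h5 : (0:ℝ) ≤ dist y ybar := dist_nonneg
        have h6 : dist y y' = dist y' y := dist_comm _ _
        have h7 : (dist y ybar + dist y' ybar) * (dist y ybar - dist y' ybar)
            ≤ (dist y ybar + dist y' ybar) * dist y' y :=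
          mul_le_mul_of_nonneg_left (by linarith) (by linarith)
        have h8 : (dist y ybar + dist y' ybar) * dist y' y ≤ (2*r₀) * dist y' y :=
          mul_le_mul_of_nonneg_right (by linarith) dist_nonneg
        nlinarith [h7, h8]
      have hry' : r y - (a₀ + 2*r₀) * dist y' y ≤ r y' := by
        simp only [hrdef]
        have h6 : dist y y' = dist y' y := dist_comm _ _
        rw [h6] at hDlb
        nlinarith
      have hdgap : (2*a₀ + 2*r₀) * dist y' y + δ₂ < gap := by
        have h1 : δ₂ ≤ gap/4 := min_le_right _ _
        have h2 : (0:ℝ) ≤ dist y' y := dist_nonneg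
        have h3 : dist y' y * (4*(a₀+r₀+1)) < gap :=
          (lt_div_iff₀ (by positivity)).1 hd1
        have h4 : (2*a₀+2*r₀) * dist y' y ≤ dist y' y * (4*(a₀+r₀+1)) := by
          nlinarith [mul_nonneg h2 ha₀0, mul_nonneg h2 hr₀pos.le]
        linarith
      have hx'ball : x' ∈ ball xbar (r y') := by
        rw [mem_ball]
        have h1 : dist x' xbar ≤ dist x' w + dist w xbar := dist_triangle _ _ _
        have h2 : dist w xbar = r y - gap := by rw [hgapdef]; ring
        have h3 : (0:ℝ) ≤ a₀ * dist y' y := by positivity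
        calc dist x' xbar ≤ dist x' w + (r y - gap) := by rw [← h2]; exact h1
          _ < (a₀ * dist y' y + δ₂) + (r y - gap) := by linarith
          _ ≤ r y' := by linarith
      refine ⟨x', ?_, ?_⟩
      · rw [hΦdef]
        simp only [if_neg (show ¬ (a' : Y) = ybar from hy'ne)]
        exact subset_closure ⟨hx'F, hx'ball⟩
      · have h1 : dist x' z ≤ dist x' w + dist w z := dist_triangle _ _ _
        have h2 : dist w z = dist z w := dist_comm _ _
        have h3 : a₀ * dist y' y ≤ (a₀+1) * dist y' y := by nlinarith [dist_nonneg (x := y') (y := y)]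
        have h4 : (a₀+1) * dist y' y < (a₀+1) * (δ/(4*(a₀+1))) :=
          mul_lt_mul_of_pos_left hd2 (by linarith)
        have h5 : (a₀ + 1) * (δ/(4*(a₀+1))) = δ/4 := by field_simp
        have h6 : δ₂ ≤ δ/4 := min_le_left _ _
        rw [h2] at h1
        linarith
  obtain ⟨sel, hselc, hselm⟩ := michael_selection Φ hΦne hΦconv hΦclosed hΦlsc
    xbar (R+1) (by linarith) hbound
  set s : Y → X := fun y => if hy : y ∈ V then sel ⟨y, hy⟩ else xbar with hsdef
  have hybarV : ybar ∈ V := mem_ball_self hr₀pos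
  have hsV : ∀ (y) (hy : y ∈ V), s y = sel ⟨y, hy⟩ := fun y hy => dif_pos hy
  have hsbar : s ybar = xbar := by
    rw [hsV ybar hybarV]
    have hmem' := hselm ⟨ybar, hybarV⟩
    simp only [hΦdef] at hmem'
    rw [if_pos trivial] at hmem'
    exact mem_singleton_iff.1 hmem'
  have hsdist : ∀ y, y ∈ V → dist (s y) xbar ≤ r y := by
    intro y hy
    rw [hsV y hy]
    exact mem_closedBall.1 (hΦsub ⟨y, hy⟩ (hselm ⟨y, hy⟩))
  refine ⟨V, ball_mem_nhds _ hr₀pos, closedBall xbar R, closedBall_mem_nhds _ hRpos,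
    s, ?_, hsbar, ?_, ?_⟩
  · rw [continuousOn_iff_continuous_restrict]
    have hres : V.restrict s = sel := by
      funext a
      show s ↑a = sel a
      rw [hsV _ a.2]
    show Continuous (V.restrict s)
    rw [hres]
    exact hselc
  · intro y hy
    refine ⟨mem_closedBall.2 ((hsdist y hy).trans (hrR y hy)), ?_⟩
    have := hΦF ⟨y, hy⟩ (hselm ⟨y, hy⟩)
    rw [hsV y hy]
    exact this
  · refine ENNReal.le_of_forall_pos_le_add fun η hη _ => ?_
    have hηR : (0:ℝ) < (η:ℝ) := hη
    have hhalf : (0:ℝ≥0) < η/2 := by positivity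
    have hρlt : regModulus F xbar ybar < regModulus F xbar ybar + ((η/2 : ℝ≥0) : ℝ≥0∞) :=
      ENNReal.lt_add_right hreg.ne (by exact_mod_cast hhalf.ne')
    obtain ⟨κ, hκAdm, hκlt⟩ := hlt _ hρlt
    obtain ⟨ε₁, hε₁, hP₁⟩ := hκAdm
    set γ : ℝ≥0 := κ + η/2 with hγdef
    have hclm : clmModulus s ybar ≤ (γ : ℝ≥0∞) := by
      refine iInf_le_of_le γ (iInf_le_of_le ?_ le_rfl)
      refine ⟨min r₀ (min ε₁ ((η:ℝ)/2)), by positivity, ?_⟩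
      intro y hy
      have hyV : y ∈ V := mem_ball.2 ((mem_ball.1 hy).trans_le (min_le_left _ _))
      have hyε₁ : y ∈ ball ybar ε₁ := mem_ball.2
        ((mem_ball.1 hy).trans_le ((min_le_right _ _).trans (min_le_left _ _)))
      have hyη : dist y ybar < (η:ℝ)/2 :=
        (mem_ball.1 hy).trans_le ((min_le_right _ _).trans (min_le_right _ _))
      have hDy : D y ≤ (κ:ℝ) * dist y ybar := by
        refine le_of_forall_pos_le_add fun δ hδ => ?_
        obtain ⟨x', hx', hd⟩ :=
          reg_key F xbar ybar κ ε₁ hP₁ (mem_ball_self hε₁) hyε₁ hmem hδ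
        calc D y ≤ dist xbar x' := infDist_le_dist_of_mem hx'
          _ = dist x' xbar := dist_comm _ _
          _ ≤ (κ:ℝ) * dist y ybar + δ := hd.le
      have h1 : dist (s y) xbar ≤ r y := hsdist y hyV
      have h2 : r y = D y + dist y ybar ^ 2 := rfl
      have h3 : dist y ybar ^ 2 ≤ ((η:ℝ)/2) * dist y ybar := by
        nlinarith [dist_nonneg (x := y) (y := ybar)]
      have hb : ‖s y - s ybar‖ = dist (s y) xbar := by rw [hsbar, dist_eq_norm]
      have hcoe : (γ:ℝ) = (κ:ℝ) + (η:ℝ)/2 := by rw [hγdef]; push_cast; ring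
      have hnd : ‖y - ybar‖ = dist y ybar := (dist_eq_norm y ybar).symm
      rw [hb, hnd, hcoe]
      calc dist (s y) xbar ≤ D y + dist y ybar ^ 2 := by rw [← h2]; exact h1
        _ ≤ (κ:ℝ) * dist y ybar + ((η:ℝ)/2) * dist y ybar := add_le_add hDy h3
        _ = ((κ:ℝ) + (η:ℝ)/2) * dist y ybar := by ring
    refine hclm.trans ?_
    have hγcoe : (γ : ℝ≥0∞) = (κ : ℝ≥0∞) + ((η/2 : ℝ≥0) : ℝ≥0∞) := by
      rw [hγdef, ENNReal.coe_add]
    have hhh : ((η/2 : ℝ≥0) : ℝ≥0∞) + ((η/2 : ℝ≥0) : ℝ≥0∞) = (η : ℝ≥0∞) := by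
      rw [← ENNReal.coe_add]
      congr 1
      rw [← NNReal.coe_inj]
      push_cast
      ring
    calc (γ : ℝ≥0∞) = (κ : ℝ≥0∞) + ((η/2 : ℝ≥0) : ℝ≥0∞) := hγcoe
      _ ≤ (regModulus F xbar ybar + ((η/2 : ℝ≥0) : ℝ≥0∞)) + ((η/2 : ℝ≥0) : ℝ≥0∞) :=
          add_le_add_left hκlt.le _
      _ = regModulus F xbar ybar + (η : ℝ≥0∞) := by rw [add_assoc, hhh]
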